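/- For every α ∈ [0,1] there exists a Buck measurable set B_α ⊆ ℕ with μ(B_α) = α. -/

import Mathlib

open scoped BigOperators

/-- Buck's measure density: the infimum of `∑ 1/mᵢ` over finite covers of `S`
by arithmetic progressions `{n | n ≡ rᵢ [MOD mᵢ]}`. -/
noncomputable def buckDensity (S : Set ℕ) : ℝ :=
  sInf {x : ℝ | ∃ (k : ℕ) (r m : Fin k → ℕ), (∀ i, 0 < m i) ∧
    (S ⊆ ⋃ i, {n : ℕ | n ≡ r i [MOD m i]}) ∧ x = ∑ i, (1 : ℝ) / (m i)}

/-- A set is Buck measurable if `μ*(S) + μ*(ℕ \ S) = 1`. -/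
def BuckMeasurable (S : Set ℕ) : Prop :=
  buckDensity S + buckDensity Sᶜ = 1

/-- `R(S : m)`: the number of residue classes modulo `m` occupied by `S`. -/
noncomputable def residueCount (S : Set ℕ) (m : ℕ) : ℕ :=
  ((fun s => s % m) '' S).ncard

/-! ### Auxiliary: bit reversal -/

/-- bit reversal of the low `k` bits of `n`. -/
def rev : ℕ → ℕ → ℕ
  | 0, _ => 0
  | k+1, n => n % 2 * 2^k + rev k (n / 2)

lemma rev_lt (k n : ℕ) : rev k n < 2^k := by
  induction k generalizing n with
  | zero => simp [rev]
  | succ k ih =>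
    have h1 : n % 2 ≤ 1 := Nat.le_of_lt_succ (Nat.mod_lt _ two_pos)
    have h2 := ih (n / 2)
    have h3 : n % 2 * 2^k ≤ 2^k := by
      calc n % 2 * 2^k ≤ 1 * 2^k := Nat.mul_le_mul_right _ h1
      _ = 2^k := one_mul _
    have h4 : (2:ℕ)^(k+1) = 2^k + 2^k := by ring
    show n % 2 * 2^k + rev k (n / 2) < 2^(k+1)
    omega

lemma rev_inj (k : ℕ) : ∀ n < 2^k, ∀ n' < 2^k, rev k n = rev k n' → n = n' := by
  induction k with
  | zero => intro n hn n' hn' _; omega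
  | succ k ih =>
    intro n hn n' hn' heq
    have hb : rev k (n / 2) < 2^k := rev_lt k (n/2)
    have hb' : rev k (n' / 2) < 2^k := rev_lt k (n'/2)
    have heq' : n % 2 * 2^k + rev k (n / 2) = n' % 2 * 2^k + rev k (n' / 2) := heq
    have hm2 : n % 2 = n' % 2 ∧ rev k (n / 2) = rev k (n' / 2) := by
      rcases Nat.mod_two_eq_zero_or_one n with h | h <;>
        rcases Nat.mod_two_eq_zero_or_one n' with h' | h' <;>
        rw [h, h'] at heq' <;> simp at heq' <;> omega
    have hdn : n / 2 < 2^k := by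
      have : (2:ℕ)^(k+1) = 2^k * 2 := by ring
      omega
    have hdn' : n' / 2 < 2^k := by
      have : (2:ℕ)^(k+1) = 2^k * 2 := by ring
      omega
    have := ih (n/2) hdn (n'/2) hdn' hm2.2
    omega

lemma rev_filter_card (k : ℕ) (P : ℕ → Prop) [DecidablePred P] :
    ((Finset.range (2^k)).filter (fun r => P (rev k r))).card
      = ((Finset.range (2^k)).filter P).card := by
  have himg : (Finset.range (2^k)).image (rev k) = Finset.range (2^k) := by
    apply Finset.eq_of_subset_of_card_le
    · intro j hj
      simp only [Finset.mem_image] at hj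
      obtain ⟨r, _, rfl⟩ := hj
      exact Finset.mem_range.2 (rev_lt k r)
    · rw [Finset.card_image_of_injOn]
      intro a ha b hb
      exact rev_inj k a (Finset.mem_range.1 ha) b (Finset.mem_range.1 hb)
  apply Finset.card_bij (fun r _ => rev k r)
  · intro r hr
    simp only [Finset.mem_filter, Finset.mem_range] at hr ⊢
    exact ⟨rev_lt k r, hr.2⟩
  · intro a ha b hb
    simp only [Finset.mem_filter, Finset.mem_range] at ha hb
    exact rev_inj k a ha.1 b hb.1
  · intro j hj
    simp only [Finset.mem_filter] at hj
    have : j ∈ (Finset.range (2^k)).image (rev k) := by rw [himg]; exact hj.1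
    simp only [Finset.mem_image] at this
    obtain ⟨r, hr, rfl⟩ := this
    exact ⟨r, Finset.mem_filter.2 ⟨hr, hj.2⟩, rfl⟩

/-! ### Auxiliary: the real number with reversed binary digits -/

/-- the real in [0,1) whose binary digits are the bits of n in reverse. -/
noncomputable def xval (n : ℕ) : ℝ :=
  if h : n = 0 then 0 else ((n % 2 : ℕ) : ℝ) / 2 + xval (n / 2) / 2
termination_by n
decreasing_by exact Nat.div_lt_self (Nat.pos_of_ne_zero h) one_lt_two

lemma xval_zero : xval 0 = 0 := by rw [xval]; simp

lemma xval_rec (n : ℕ) : xval n = ((n % 2 : ℕ) : ℝ) / 2 + xval (n / 2) / 2 := by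
  by_cases h : n = 0
  · subst h; simp [xval_zero]
  · rw [xval]; simp [h]

lemma xval_mem (n : ℕ) : 0 ≤ xval n ∧ xval n < 1 := by
  induction n using Nat.strong_induction_on with
  | _ n ih =>
    by_cases h : n = 0
    · subst h; simp [xval_zero]
    · have hd : n / 2 < n := Nat.div_lt_self (Nat.pos_of_ne_zero h) one_lt_two
      obtain ⟨h0, h1⟩ := ih (n / 2) hd
      have hm : ((n % 2 : ℕ) : ℝ) ≤ 1 := by
        have : n % 2 ≤ 1 := Nat.le_of_lt_succ (Nat.mod_lt _ two_pos)
        exact_mod_cast this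
      have hm0 : (0:ℝ) ≤ ((n % 2 : ℕ) : ℝ) := Nat.cast_nonneg _
      rw [xval_rec]
      constructor <;> nlinarith

lemma xval_split (k : ℕ) : ∀ n : ℕ,
    xval n = (rev k (n % 2^k) : ℝ) / 2^k + xval (n / 2^k) / 2^k := by
  induction k with
  | zero => intro n; simp [rev]
  | succ k ih =>
    intro n
    have e1 : n % 2^(k+1) % 2 = n % 2 := Nat.mod_mod_of_dvd n (dvd_pow_self 2 (Nat.succ_ne_zero k))
    have e2 : n % 2^(k+1) / 2 = n / 2 % 2^k := by
      have : (2:ℕ)^(k+1) = 2 * 2^k := by ring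
      rw [this, Nat.mod_mul_right_div_self]
    have e3 : n / 2^(k+1) = n / 2 / 2^k := by
      rw [Nat.div_div_eq_div_mul]; ring_nf
    have hrev : (rev (k+1) (n % 2^(k+1)) : ℝ) = (n % 2 : ℕ) * 2^k + (rev k (n / 2 % 2^k) : ℕ) := by
      show ((n % 2^(k+1) % 2 * 2^k + rev k (n % 2^(k+1) / 2) : ℕ) : ℝ) = _
      rw [e1, e2]; push_cast; ring
    rw [xval_rec n, ih (n / 2), hrev, e3]
    have h2k : (2:ℝ)^k ≠ 0 := by positivity
    field_simp
    ring

/-! ### Auxiliary: basic properties of the Buck density -/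

def buckCoverSet (S : Set ℕ) : Set ℝ :=
  {x : ℝ | ∃ (k : ℕ) (r m : Fin k → ℕ), (∀ i, 0 < m i) ∧
    (S ⊆ ⋃ i, {n : ℕ | n ≡ r i [MOD m i]}) ∧ x = ∑ i, (1 : ℝ) / (m i)}

lemma buckDensity_eq (S : Set ℕ) : buckDensity S = sInf (buckCoverSet S) := rfl

lemma buckCoverSet_nonempty (S : Set ℕ) : (buckCoverSet S).Nonempty := by
  refine ⟨1, 1, fun _ => 0, fun _ => 1, fun _ => one_pos, ?_, by simp⟩
  intro n _
  exact Set.mem_iUnion.2 ⟨0, Nat.modEq_one⟩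

lemma buckCoverSet_bddBelow (S : Set ℕ) : BddBelow (buckCoverSet S) := by
  refine ⟨0, fun x hx => ?_⟩
  obtain ⟨k, r, m, hm, _, rfl⟩ := hx
  exact Finset.sum_nonneg fun i _ => by positivity

/-- counting: a finite cover of all of ℕ by progressions has total measure ≥ 1 -/
lemma sum_ge_one (k : ℕ) (r m : Fin k → ℕ) (hm : ∀ i, 0 < m i)
    (hcov : ∀ n : ℕ, ∃ i, n ≡ r i [MOD m i]) :
    (1 : ℝ) ≤ ∑ i, (1 : ℝ) / (m i) := by
  classical
  set M : ℕ := ∏ i, m i with hM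
  have hMpos : 0 < M := Finset.prod_pos (fun i _ => hm i)
  have hdvd : ∀ i, m i ∣ M := fun i => Finset.dvd_prod_of_mem m (Finset.mem_univ i)
  have hcard : ∀ i : Fin k,
      ((Finset.range M).filter (fun t => t ≡ r i [MOD m i])).card ≤ M / m i := by
    intro i
    have : ((Finset.range M).filter (fun t => t ≡ r i [MOD m i])).card
        ≤ (Finset.range (M / m i)).card := by
      apply Finset.card_le_card_of_injOn (fun t => t / m i)
      · intro t ht
        simp only [Finset.coe_filter, Finset.mem_coe, Finset.mem_filter, Finset.mem_range, Set.mem_setOf_eq] at ht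
        exact Finset.mem_range.2 (Nat.div_lt_div_of_lt_of_dvd (hdvd i) ht.1)
      · intro a ha b hb hab
        simp only [Finset.coe_filter, Set.mem_setOf_eq, Finset.mem_range] at ha hb
        have h1 := Nat.div_add_mod a (m i)
        have h2 := Nat.div_add_mod b (m i)
        have hab2 : a / m i = b / m i := by simpa using hab
        have hmod : a % m i = b % m i := by
          unfold Nat.ModEq at ha hb
          omega
        rw [hab2, hmod] at h1
        omega
    simpa using this
  have hunion : M ≤ ∑ i, ((Finset.range M).filter (fun t => t ≡ r i [MOD m i])).card := by
    have hsub : Finset.range M ⊆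
        Finset.univ.biUnion
          (fun i : Fin k => (Finset.range M).filter (fun t => t ≡ r i [MOD m i])) := by
      intro t ht
      obtain ⟨i, hi⟩ := hcov t
      exact Finset.mem_biUnion.2 ⟨i, Finset.mem_univ i, Finset.mem_filter.2 ⟨ht, hi⟩⟩
    calc M = (Finset.range M).card := (Finset.card_range M).symm
    _ ≤ _ := Finset.card_le_card hsub
    _ ≤ _ := Finset.card_biUnion_le
  have hreal : (M : ℝ) ≤ ∑ i, (M : ℝ) / (m i) := by
    calc (M:ℝ) ≤ ∑ i, (((Finset.range M).filter (fun t => t ≡ r i [MOD m i])).card : ℝ) := by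
          exact_mod_cast hunion
    _ ≤ ∑ i, (M : ℝ) / (m i) := by
        apply Finset.sum_le_sum
        intro i _
        have h1 : (((Finset.range M).filter (fun t => t ≡ r i [MOD m i])).card : ℝ)
            ≤ ((M / m i : ℕ) : ℝ) := by exact_mod_cast hcard i
        have h2 : ((M / m i : ℕ) : ℝ) = (M : ℝ) / (m i) := by
          rw [Nat.cast_div (hdvd i)]
          exact_mod_cast (hm i).ne'
        linarith [h1, h2.le, h2.ge]
  have hfin : (M : ℝ) ≤ (M : ℝ) * ∑ i, (1:ℝ) / (m i) := by
    rw [Finset.mul_sum]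
    convert hreal using 2 with i
    ring
  have hMr : (0:ℝ) < M := by exact_mod_cast hMpos
  nlinarith

lemma buckDensity_add_compl_ge (S : Set ℕ) :
    1 ≤ buckDensity S + buckDensity Sᶜ := by
  rw [buckDensity_eq, buckDensity_eq]
  have h1 := buckCoverSet_nonempty S
  have h2 := buckCoverSet_nonempty Sᶜ
  have key : ∀ x ∈ buckCoverSet S, ∀ y ∈ buckCoverSet Sᶜ, 1 ≤ x + y := by
    rintro x ⟨k₁, r₁, m₁, hm₁, hc₁, rfl⟩ y ⟨k₂, r₂, m₂, hm₂, hc₂, rfl⟩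
    have := sum_ge_one (k₁ + k₂) (Fin.addCases r₁ r₂) (Fin.addCases m₁ m₂)
      (fun i => by induction i using Fin.addCases with
        | left i => simpa using hm₁ i
        | right i => simpa using hm₂ i)
      (fun n => by
        by_cases hn : n ∈ S
        · obtain ⟨t, ⟨i, rfl⟩, hi⟩ := hc₁ hn
          exact ⟨Fin.castAdd k₂ i, by simpa using hi⟩
        · obtain ⟨t, ⟨i, rfl⟩, hi⟩ := hc₂ hn
          exact ⟨Fin.natAdd k₁ i, by simpa using hi⟩)
    rw [Fin.sum_univ_add] at this
    simpa using this
  have hle : 1 - sInf (buckCoverSet Sᶜ) ≤ sInf (buckCoverSet S) := by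
    apply le_csInf h1
    intro x hx
    have : 1 - x ≤ sInf (buckCoverSet Sᶜ) := by
      apply le_csInf h2
      intro y hy
      linarith [key x hx y hy]
    linarith
  linarith

/-- upper bound from a residue-set cover mod N -/
lemma buckDensity_le_of_cover (S : Set ℕ) (N : ℕ) (hN : 0 < N) (F : Finset ℕ)
    (hcov : ∀ n ∈ S, n % N ∈ F) :
    buckDensity S ≤ (F.card : ℝ) / N := by
  rw [buckDensity_eq]
  apply csInf_le (buckCoverSet_bddBelow S)
  refine ⟨F.card, fun i => ((F.equivFin.symm i : ℕ)), fun _ => N, fun _ => hN, ?_, ?_⟩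
  · intro n hn
    have hmem : n % N ∈ F := hcov n hn
    refine Set.mem_iUnion.2 ⟨F.equivFin ⟨n % N, hmem⟩, ?_⟩
    show n ≡ ((F.equivFin.symm (F.equivFin ⟨n % N, hmem⟩) : F) : ℕ) [MOD N]
    rw [Equiv.symm_apply_apply]
    exact (Nat.mod_mod_of_dvd n dvd_rfl).symm
  · rw [Finset.sum_const, Finset.card_univ, Fintype.card_fin]
    simp [div_eq_mul_inv]

/-! ### Main theorem -/

theorem stmt_2 (α : ℝ) (hα : α ∈ Set.Icc (0 : ℝ) 1) :
    ∃ B : Set ℕ, BuckMeasurable B ∧ buckDensity B = α := by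
  classical
  obtain ⟨hα0, hα1⟩ := hα
  set B : Set ℕ := {n | xval n < α} with hBdef
  have hble : ∀ k : ℕ, buckDensity B ≤ α + 1 / 2^k := by
    intro k
    have hNpos : (0:ℕ) < 2^k := Nat.two_pow_pos k
    have h2r : (0:ℝ) < 2^k := by positivity
    set F := (Finset.range (2^k)).filter (fun r => (rev k r : ℝ) < α * 2^k) with hF
    have hcov : ∀ n ∈ B, n % 2^k ∈ F := by
      intro n hn
      have hsplit := xval_split k n
      have hx0 := (xval_mem (n / 2^k)).1
      have hrev : (rev k (n % 2^k) : ℝ) / 2^k ≤ xval n := by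
        rw [hsplit]
        have : (0:ℝ) ≤ xval (n / 2^k) / 2^k := by positivity
        linarith
      have hnB : xval n < α := hn
      have hlt : (rev k (n % 2^k) : ℝ) < α * 2^k :=
        (div_lt_iff₀ h2r).1 (lt_of_le_of_lt hrev hnB)
      exact Finset.mem_filter.2 ⟨Finset.mem_range.2 (Nat.mod_lt n hNpos), hlt⟩
    have hle := buckDensity_le_of_cover B (2^k) hNpos F hcov
    have hcard : (F.card : ℝ) ≤ α * 2^k + 1 := by
      have hc : F.card = ((Finset.range (2^k)).filter (fun j : ℕ => ((j:ℕ):ℝ) < α * 2^k)).card := by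
        rw [hF]; exact rev_filter_card k (fun j : ℕ => ((j:ℕ):ℝ) < α * 2^k)
      rw [hc]
      have hsub : (Finset.range (2^k)).filter (fun j : ℕ => ((j:ℕ):ℝ) < α * 2^k)
          ⊆ Finset.range ⌈α * 2^k⌉₊ := by
        intro j hj
        simp only [Finset.mem_filter, Finset.mem_range] at hj ⊢
        exact Nat.lt_ceil.2 hj.2
      have h1 := Finset.card_le_card hsub
      rw [Finset.card_range] at h1
      have hceil : (⌈α * 2^k⌉₊ : ℝ) < α * 2^k + 1 := Nat.ceil_lt_add_one (by positivity)
      have h1' : (((Finset.range (2^k)).filter (fun j : ℕ => ((j:ℕ):ℝ) < α * 2^k)).card : ℝ)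
          ≤ (⌈α * 2^k⌉₊ : ℝ) := by exact_mod_cast h1
      linarith
    have hNcast : ((2^k : ℕ) : ℝ) = (2:ℝ)^k := by push_cast; ring
    rw [hNcast] at hle
    have hdiv : (F.card : ℝ) / 2^k ≤ (α * 2^k + 1) / 2^k := by gcongr
    have heq : (α * 2^k + 1) / 2^k = α + 1 / 2^k := by field_simp
    linarith
  have hbcle : ∀ k : ℕ, buckDensity Bᶜ ≤ (1 - α) + 1 / 2^k := by
    intro k
    have hNpos : (0:ℕ) < 2^k := Nat.two_pow_pos k
    have h2r : (0:ℝ) < 2^k := by positivity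
    set G := (Finset.range (2^k)).filter (fun r => α * 2^k - 1 < (rev k r : ℝ)) with hG
    have hcov : ∀ n ∈ Bᶜ, n % 2^k ∈ G := by
      intro n hn
      have hsplit := xval_split k n
      have hx1 := (xval_mem (n / 2^k)).2
      have hge : α ≤ xval n := not_lt.1 hn
      have hup : xval n < ((rev k (n % 2^k) : ℝ) + 1) / 2^k := by
        rw [hsplit, add_div]
        have : xval (n / 2^k) / 2^k < 1 / 2^k := by gcongr
        linarith
      have hlt : α * 2^k < (rev k (n % 2^k) : ℝ) + 1 :=
        (lt_div_iff₀ h2r).1 (lt_of_le_of_lt hge hup)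
      exact Finset.mem_filter.2 ⟨Finset.mem_range.2 (Nat.mod_lt n hNpos), by linarith⟩
    have hle := buckDensity_le_of_cover Bᶜ (2^k) hNpos G hcov
    have hcard : (G.card : ℝ) ≤ (1 - α) * 2^k + 1 := by
      have hc : G.card
          = ((Finset.range (2^k)).filter (fun j : ℕ => α * 2^k - 1 < ((j:ℕ):ℝ))).card := by
        rw [hG]; exact rev_filter_card k (fun j : ℕ => α * 2^k - 1 < ((j:ℕ):ℝ))
      rw [hc]
      have hadd := Finset.card_filter_add_card_filter_not
        (s := Finset.range (2^k)) (p := fun j : ℕ => α * 2^k - 1 < ((j:ℕ):ℝ))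
      rw [Finset.card_range] at hadd
      have hflle : ⌊α * 2^k⌋₊ ≤ 2^k := by
        have h2 : α * 2^k ≤ ((2^k : ℕ) : ℝ) := by push_cast; nlinarith
        calc ⌊α * 2^k⌋₊ ≤ ⌊((2^k : ℕ) : ℝ)⌋₊ := Nat.floor_le_floor h2
        _ = 2^k := Nat.floor_natCast _
      have hsub : Finset.range ⌊α * 2^k⌋₊
          ⊆ (Finset.range (2^k)).filter (fun j : ℕ => ¬ (α * 2^k - 1 < ((j:ℕ):ℝ))) := by
        intro j hj
        rw [Finset.mem_range] at hj
        have hfl : (⌊α * 2^k⌋₊ : ℝ) ≤ α * 2^k := Nat.floor_le (by positivity)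
        have hjr : ((j:ℕ):ℝ) + 1 ≤ (⌊α * 2^k⌋₊ : ℝ) := by exact_mod_cast hj
        simp only [Finset.mem_filter, Finset.mem_range, not_lt]
        exact ⟨lt_of_lt_of_le hj hflle, by linarith⟩
      have h1 := Finset.card_le_card hsub
      rw [Finset.card_range] at h1
      have hfl2 : α * 2^k - 1 < (⌊α * 2^k⌋₊ : ℝ) := Nat.sub_one_lt_floor _
      have haddr : ((((Finset.range (2^k)).filter
            (fun j : ℕ => α * 2^k - 1 < ((j:ℕ):ℝ))).card : ℝ))
          + ((((Finset.range (2^k)).filter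
            (fun j : ℕ => ¬ (α * 2^k - 1 < ((j:ℕ):ℝ)))).card : ℝ)) = ((2^k : ℕ) : ℝ) := by
        exact_mod_cast hadd
      have h1r : ((⌊α * 2^k⌋₊ : ℕ) : ℝ)
          ≤ (((Finset.range (2^k)).filter
            (fun j : ℕ => ¬ (α * 2^k - 1 < ((j:ℕ):ℝ)))).card : ℝ) := by exact_mod_cast h1
      have hNc : ((2^k : ℕ) : ℝ) = (2:ℝ)^k := by push_cast; ring
      rw [hNc] at haddr
      linarith
    have hNcast : ((2^k : ℕ) : ℝ) = (2:ℝ)^k := by push_cast; ring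
    rw [hNcast] at hle
    have hdiv : (G.card : ℝ) / 2^k ≤ ((1 - α) * 2^k + 1) / 2^k := by gcongr
    have heq : ((1 - α) * 2^k + 1) / 2^k = (1 - α) + 1 / 2^k := by field_simp
    linarith
  have hsum := buckDensity_add_compl_ge B
  have hBle : buckDensity B ≤ α := by
    by_contra h
    push_neg at h
    obtain ⟨k, hk⟩ := exists_pow_lt_of_lt_one (sub_pos.2 h) (by norm_num : (1:ℝ)/2 < 1)
    have h12 : ((1:ℝ)/2)^k = 1/2^k := by rw [div_pow, one_pow]
    linarith [hble k]
  have hBcle : buckDensity Bᶜ ≤ 1 - α := by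
    by_contra h
    push_neg at h
    obtain ⟨k, hk⟩ := exists_pow_lt_of_lt_one (sub_pos.2 h) (by norm_num : (1:ℝ)/2 < 1)
    have h12 : ((1:ℝ)/2)^k = 1/2^k := by rw [div_pow, one_pow]
    linarith [hbcle k]
  refine ⟨B, ?_, ?_⟩
  · unfold BuckMeasurable
    linarith
  · linarith
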